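/- arXiv:2310.19352 — 7 statements merged into one kernel-verified Lean document; each statement's English description precedes it below -/
import Mathlib

section
/- For all positive real numbers Δt, Δx, μ, K, ε and every θ ∈ ℝ, every complex eigenvalue λ of the amplification matrix A_θ⁻¹B_θ satisfies |λ| ≤ 1; that is, the semi-implicit scheme for the linearized one-dimensional fluid–structure interaction model is unconditionally stable. -/
open Matrix

/-- Extraction of the characteristic equation of the amplification matrix. -/
lemma semi_implicit_char_eq (Δt α β : ℝ) (hα0 : α ≠ 0) (l : ℂ)
    (hl : Matrix.det (((!![α, 0; Δt, 1] : Matrix (Fin 2) (Fin 2) ℝ)⁻¹ *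
      !![1, β; 0, 1]).map (Complex.ofReal) - l • 1) = 0) :
    (α : ℂ) * l ^ 2 - ((1 : ℂ) + α - Δt * β) * l + 1 = 0 := by
  have hαC : (α : ℂ) ≠ 0 := by exact_mod_cast hα0
  rw [Matrix.inv_def, Matrix.adjugate_fin_two, Matrix.det_fin_two_of] at hl
  simp [Matrix.det_fin_two, Matrix.mul_apply, Fin.sum_univ_succ, Matrix.smul_apply,
    Matrix.one_apply, Matrix.map_apply] at hl
  field_simp at hl
  have h2 : (α : ℂ) * ((α : ℂ) * l ^ 2 - ((1 : ℂ) + α - Δt * β) * l + 1) = 0 := by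
    linear_combination hl
  rcases mul_eq_zero.1 h2 with h | h
  · exact absurd h hαC
  · exact h

/-- Jury-type stability criterion for the quadratic `α l² - t l + 1 = 0`. -/
lemma semi_implicit_root_bound (α t : ℝ) (hα : 1 ≤ α) (ht2 : 2 ≤ t) (ht : t ≤ 1 + α)
    (l : ℂ) (heq : (α : ℂ) * l ^ 2 - (t : ℂ) * l + 1 = 0) : ‖l‖ ≤ 1 := by
  have hα0 : 0 < α := by linarith
  rw [Complex.ext_iff] at heq
  simp [pow_two, Complex.mul_re, Complex.mul_im] at heq
  obtain ⟨hre, him⟩ := heq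
  have key : l.re ^ 2 + l.im ^ 2 ≤ 1 := by
    rcases eq_or_ne l.im 0 with hy0 | hy0
    · rw [hy0] at hre ⊢
      have h1 : l.re ≤ 1 := by
        by_contra h
        push_neg at h
        have h4 : 0 < (α * l.re - 1) * (l.re - 1) := by
          apply mul_pos <;> nlinarith
        nlinarith [hre, h4]
      have h2 : -1 ≤ l.re := by
        by_contra h
        push_neg at h
        nlinarith [hre, mul_pos (show (0:ℝ) < t by linarith)
          (show (0:ℝ) < -l.re - 1 by linarith),
          mul_pos hα0 (mul_pos (show (0:ℝ) < -l.re by linarith)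
            (show (0:ℝ) < -l.re by linarith))]
      nlinarith
    · have hfac : l.im * (2 * α * l.re - t) = 0 := by linear_combination him
      have hxv : 2 * α * l.re - t = 0 := by
        rcases mul_eq_zero.1 hfac with h | h
        · exact absurd h hy0
        · exact h
      have ht' : α * (l.re ^ 2 + l.im ^ 2) = 1 := by
        linear_combination (-1 : ℝ) * hre + l.re * hxv
      nlinarith
  nlinarith [Complex.sq_norm l, norm_nonneg l, Complex.normSq_apply l]

/-- Von Neumann stability of the semi-implicit scheme for the linearized
one-dimensional fluid–structure interaction model: for all positive
`Δt, Δx, μ, K, ε` and every `θ ∈ ℝ`, every complex eigenvalue `l` of the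
amplification matrix `A_θ⁻¹ B_θ` satisfies `|l| ≤ 1`. -/
theorem semi_implicit_unconditionally_stable
    (Δt Δx μ K ε θ : ℝ)
    (hΔt : 0 < Δt) (hΔx : 0 < Δx) (hμ : 0 < μ) (hK : 0 < K) (hε : 0 < ε)
    (α β : ℝ)
    (hα : α = 1 + 4 * (Δt / Δx ^ 2) * (μ + Δt * K / ε) * Real.sin (θ / 2) ^ 2)
    (hβ : β = 4 * (Δt / Δx ^ 2) * (K / ε) * Real.sin (θ / 2) ^ 2)
    (A B : Matrix (Fin 2) (Fin 2) ℝ)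
    (hA : A = !![α, 0; Δt, 1]) (hB : B = !![1, β; 0, 1])
    (l : ℂ)
    (hl : Matrix.det ((A⁻¹ * B).map (Complex.ofReal) - l • 1) = 0) :
    ‖l‖ ≤ 1 := by
  have hα1 : 1 ≤ α := by
    rw [hα]
    have : (0:ℝ) ≤ 4 * (Δt / Δx ^ 2) * (μ + Δt * K / ε) * Real.sin (θ / 2) ^ 2 := by
      positivity
    linarith
  have hβ0 : 0 ≤ β := by rw [hβ]; positivity
  have hΔtβ : Δt * β ≤ α - 1 := by
    have hdiff : α - 1 - Δt * β = 4 * (Δt / Δx ^ 2) * μ * Real.sin (θ / 2) ^ 2 := by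
      rw [hα, hβ]; field_simp; ring
    have : (0:ℝ) ≤ 4 * (Δt / Δx ^ 2) * μ * Real.sin (θ / 2) ^ 2 := by positivity
    linarith
  have h0 : 0 ≤ Δt * β := mul_nonneg hΔt.le hβ0
  subst hA hB
  have heq := semi_implicit_char_eq Δt α β (by linarith) l hl
  have heq' : (α : ℂ) * l ^ 2 - ((1 + α - Δt * β : ℝ) : ℂ) * l + 1 = 0 := by
    push_cast
    linear_combination heq
  exact semi_implicit_root_bound α (1 + α - Δt * β) hα1 (by linarith) (by linarith) l heq'
end

section
/- Let α, s be real numbers with α ≥ 1 and 0 < s ≤ 1 + α. Then every complex root λ of α·λ² − s·λ + 1 = 0 satisfies |λ| ≤ 1. -/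
/-- If `α ≥ 1` and `0 < s ≤ 1 + α`, then every complex root `l` of
`α l² − s l + 1 = 0` satisfies `|l| ≤ 1`. -/
theorem quadratic_all_roots_modulus_le_one
    (α s : ℝ) (hα : 1 ≤ α) (hs : 0 < s) (hs' : s ≤ 1 + α)
    (l : ℂ) (hroot : (α : ℂ) * l ^ 2 - (s : ℂ) * l + 1 = 0) :
    ‖l‖ ≤ 1 := by
  set x := l.re with hx
  set y := l.im with hy
  have hre : α * (x * x - y * y) - s * x + 1 = 0 := by
    have := congrArg Complex.re hroot
    simpa [pow_two, Complex.mul_re, Complex.mul_im, hx, hy] using this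
  have him : α * (x * y + y * x) - s * y = 0 := by
    have := congrArg Complex.im hroot
    simpa [pow_two, Complex.mul_re, Complex.mul_im, hx, hy] using this
  have hsq : ‖l‖ ^ 2 = x * x + y * y := by
    rw [Complex.sq_norm, Complex.normSq_apply]
  have key : ‖l‖ ^ 2 ≤ 1 := by
    rcases eq_or_ne y 0 with hy0 | hy0
    · -- real root
      rw [hsq, hy0]
      have hyy : y * y = 0 := by rw [hy0]; ring
      have hx' : α * (x * x) - s * x + 1 = 0 := by nlinarith [hre, hyy]
      have hxpos : 0 < x := by
        by_contra hc
        push_neg at hc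
        have : s * x ≤ 0 := mul_nonpos_of_nonneg_of_nonpos hs.le hc
        nlinarith [hx', mul_self_nonneg x]
      have hxle : x ≤ 1 := by
        by_contra hc
        push_neg at hc
        have hA : 0 < (α * x - 1) * (x - 1) :=
          mul_pos (by nlinarith) (by linarith)
        have hB : 0 ≤ (1 + α - s) * x :=
          mul_nonneg (by linarith) hxpos.le
        nlinarith [hx', hA, hB]
      nlinarith [hxpos, hxle]
    · -- complex root: x = s / (2α)
      have h2 : 2 * α * x = s := by
        have : y * (2 * α * x - s) = 0 := by nlinarith [him]
        rcases mul_eq_zero.mp this with h | h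
        · exact absurd h hy0
        · linarith
      have hαpos : (0:ℝ) < α := by linarith
      have h1 : α * (x * x + y * y) = 1 := by linear_combination -hre + x * h2
      rw [hsq]
      nlinarith [h1, hαpos]
  nlinarith [norm_nonneg l, key]
end

section
/- Let B be a symmetric 2×2 real matrix and n ∈ ℝ² a unit vector (‖n‖ = 1) with (Bn)·n ≠ 0, and let 𝒜 = B − ((Bn)⊗(Bn))/((Bn)·n). Then Tr(𝒜) = det(B)/((Bn)·n). -/
open Matrix

/-- For a symmetric 2×2 real matrix `B` and a unit vector `n ∈ ℝ²` with
`(Bn)·n ≠ 0`, the surface deformation tensor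
`𝒜 = B − ((Bn)⊗(Bn))/((Bn)·n)` satisfies `Tr 𝒜 = det B / ((Bn)·n)`. -/
theorem surface_tensor_trace_eq_det_div
    (B : Matrix (Fin 2) (Fin 2) ℝ) (hB : B.IsSymm)
    (n : Fin 2 → ℝ) (hn : n ⬝ᵥ n = 1)
    (h : (B *ᵥ n) ⬝ᵥ n ≠ 0)
    (𝒜 : Matrix (Fin 2) (Fin 2) ℝ)
    (h𝒜 : 𝒜 = B - ((B *ᵥ n) ⬝ᵥ n)⁻¹ • vecMulVec (B *ᵥ n) (B *ᵥ n)) :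
    𝒜.trace = B.det / ((B *ᵥ n) ⬝ᵥ n) := by
  have hs : B 1 0 = B 0 1 := by
    have := congrFun (congrFun hB 0) 1
    simpa [Matrix.transpose_apply] using this
  subst h𝒜
  simp only [Matrix.trace_fin_two, Matrix.det_fin_two, Matrix.sub_apply,
    Matrix.smul_apply, vecMulVec_apply, mulVec, dotProduct, Fin.sum_univ_two,
    smul_eq_mul] at *
  rw [hs] at h ⊢
  generalize hd : (B 0 0 * n 0 + B 0 1 * n 1) * n 0 + (B 0 1 * n 0 + B 1 1 * n 1) * n 1 = d at h ⊢
  field_simp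
  linear_combination (B 0 0 * B 1 1 - B 0 1 * B 0 1) * hn - (B 0 0 + B 1 1) * hd
end

section
/- Let N be an invertible 2×2 real matrix, B = N⁻¹·N⁻ᵀ, let w ∈ ℝ² be nonzero, set n = Nᵀw/‖Nᵀw‖, and let 𝒜 = B − ((Bn)⊗(Bn))/((Bn)·n). Then Tr(𝒜) = ‖Nᵀw‖²/((det N)²·‖w‖²); equivalently, the area-variation measure Z = √Tr(𝒜) equals J·‖Nᵀw‖/‖w‖ with J = |det N|⁻¹. -/
open Matrix

set_option maxHeartbeats 1000000 in
/-- Appendix A proposition: for an invertible 2×2 real matrix `N`,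
`B = N⁻¹ N⁻ᵀ`, a nonzero `w ∈ ℝ²`, `n = Nᵀw/‖Nᵀw‖`, and the surface
deformation tensor `𝒜 = B − ((Bn)⊗(Bn))/((Bn)·n)`, one has
`Tr 𝒜 = ‖Nᵀw‖² / ((det N)² ‖w‖²)`; equivalently the area-variation measure
`Z = √(Tr 𝒜)` equals `J ‖Nᵀw‖ / ‖w‖` with `J = |det N|⁻¹`
(squared Euclidean norms written as dot products). -/
theorem area_variation_measure
    (N : Matrix (Fin 2) (Fin 2) ℝ) (hN : IsUnit N.det)
    (B : Matrix (Fin 2) (Fin 2) ℝ) (hB : B = N⁻¹ * (N⁻¹)ᵀ)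
    (w : Fin 2 → ℝ) (hw : w ≠ 0)
    (n : Fin 2 → ℝ)
    (hn : n = (Real.sqrt ((Nᵀ *ᵥ w) ⬝ᵥ (Nᵀ *ᵥ w)))⁻¹ • (Nᵀ *ᵥ w))
    (𝒜 : Matrix (Fin 2) (Fin 2) ℝ)
    (h𝒜 : 𝒜 = B - ((B *ᵥ n) ⬝ᵥ n)⁻¹ • vecMulVec (B *ᵥ n) (B *ᵥ n)) :
    𝒜.trace = ((Nᵀ *ᵥ w) ⬝ᵥ (Nᵀ *ᵥ w)) / (N.det ^ 2 * (w ⬝ᵥ w))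
      ∧ Real.sqrt 𝒜.trace
          = |N.det|⁻¹ * (Real.sqrt ((Nᵀ *ᵥ w) ⬝ᵥ (Nᵀ *ᵥ w)) / Real.sqrt (w ⬝ᵥ w)) := by
  have hdet : N.det ≠ 0 := by
    simpa [isUnit_iff_ne_zero] using hN
  have hNT : IsUnit Nᵀ.det := by simpa using hN
  set u : Fin 2 → ℝ := Nᵀ *ᵥ w with hu
  set s : ℝ := Real.sqrt (u ⬝ᵥ u) with hs
  clear_value u s
  have hu0 : u ≠ 0 := by
    intro h
    apply hw
    have : (Nᵀ)⁻¹ *ᵥ (Nᵀ *ᵥ w) = (Nᵀ)⁻¹ *ᵥ (0 : Fin 2 → ℝ) := by rw [← hu, h]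
    rw [Matrix.mulVec_mulVec, Matrix.nonsing_inv_mul _ hNT, Matrix.one_mulVec, Matrix.mulVec_zero] at this
    exact this
  have hw2 : w ⬝ᵥ w ≠ 0 := fun h => hw (dotProduct_self_eq_zero.mp h)
  have huu : u ⬝ᵥ u ≠ 0 := fun h => hu0 (dotProduct_self_eq_zero.mp h)
  have huu_nonneg : 0 ≤ u ⬝ᵥ u := by
    simp only [dotProduct]
    exact Finset.sum_nonneg fun i _ => mul_self_nonneg _
  have hs0 : s ≠ 0 := by
    rw [hs]
    exact Real.sqrt_ne_zero'.mpr (lt_of_le_of_ne huu_nonneg (Ne.symm huu))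
  -- B u = N⁻¹ w
  have hBu : B *ᵥ u = N⁻¹ *ᵥ w := by
    rw [hB, hu, Matrix.mulVec_mulVec, Matrix.mul_assoc, ← Matrix.transpose_mul,
      Matrix.mul_nonsing_inv _ hN, Matrix.transpose_one, Matrix.mul_one]
  -- (Bu)·u = w·w
  have hBuu : (B *ᵥ u) ⬝ᵥ u = w ⬝ᵥ w := by
    rw [hBu, hu, dotProduct_mulVec, Matrix.vecMul_transpose, Matrix.mulVec_mulVec,
      Matrix.mul_nonsing_inv _ hN, Matrix.one_mulVec]
  -- trace of vecMulVec
  have htrv : ∀ x y : Fin 2 → ℝ, (vecMulVec x y).trace = x ⬝ᵥ y := by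
    intro x y
    simp [Matrix.trace_fin_two, Matrix.vecMulVec_apply, dotProduct, Fin.sum_univ_two]
  -- trace formula
  have htr : 𝒜.trace = B.trace - ((B *ᵥ u) ⬝ᵥ (B *ᵥ u)) / (w ⬝ᵥ w) := by
    have hBn : B *ᵥ n = s⁻¹ • (B *ᵥ u) := by rw [hn]; exact Matrix.mulVec_smul ..
    rw [h𝒜, Matrix.trace_sub, Matrix.trace_smul, htrv, hBn, hn]
    have h1 : (s⁻¹ • (B *ᵥ u)) ⬝ᵥ (s⁻¹ • u) = s⁻¹ * s⁻¹ * (w ⬝ᵥ w) := by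
      rw [smul_dotProduct, dotProduct_smul, hBuu, smul_eq_mul, smul_eq_mul]; ring
    have h2 : (s⁻¹ • (B *ᵥ u)) ⬝ᵥ (s⁻¹ • (B *ᵥ u))
        = s⁻¹ * s⁻¹ * ((B *ᵥ u) ⬝ᵥ (B *ᵥ u)) := by
      rw [smul_dotProduct, dotProduct_smul, smul_eq_mul, smul_eq_mul]; ring
    rw [h1, h2, smul_eq_mul]
    congr 1
    generalize (B *ᵥ u) ⬝ᵥ (B *ᵥ u) = C
    generalize hW : w ⬝ᵥ w = W at hw2 ⊢
    field_simp
  -- the key scalar identity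
  have key : 𝒜.trace = (u ⬝ᵥ u) / (N.det ^ 2 * (w ⬝ᵥ w)) := by
    have hNinv : N⁻¹ = (N.det)⁻¹ • !![N 1 1, -N 0 1; -N 1 0, N 0 0] := by
      rw [Matrix.inv_def, Matrix.adjugate_fin_two, Ring.inverse_eq_inv']
    have hdet2 : N.det = N 0 0 * N 1 1 - N 0 1 * N 1 0 := Matrix.det_fin_two N
    have e00 : N⁻¹ 0 0 = (N.det)⁻¹ * N 1 1 := by rw [hNinv]; simp
    have e01 : N⁻¹ 0 1 = (N.det)⁻¹ * (-N 0 1) := by rw [hNinv]; simp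
    have e10 : N⁻¹ 1 0 = (N.det)⁻¹ * (-N 1 0) := by rw [hNinv]; simp
    have e11 : N⁻¹ 1 1 = (N.det)⁻¹ * (N 0 0) := by rw [hNinv]; simp
    have htrB : B.trace = N⁻¹ 0 0 ^ 2 + N⁻¹ 0 1 ^ 2 + N⁻¹ 1 0 ^ 2 + N⁻¹ 1 1 ^ 2 := by
      rw [hB]
      simp only [Matrix.trace_fin_two, Matrix.mul_apply, Fin.sum_univ_two,
        Matrix.transpose_apply]
      ring
    have hMw : (N⁻¹ *ᵥ w) ⬝ᵥ (N⁻¹ *ᵥ w)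
        = (N⁻¹ 0 0 * w 0 + N⁻¹ 0 1 * w 1) ^ 2 + (N⁻¹ 1 0 * w 0 + N⁻¹ 1 1 * w 1) ^ 2 := by
      simp only [Matrix.mulVec, dotProduct, Fin.sum_univ_two]
      ring
    have hNw : u ⬝ᵥ u = (N 0 0 * w 0 + N 1 0 * w 1) ^ 2 + (N 0 1 * w 0 + N 1 1 * w 1) ^ 2 := by
      rw [hu]
      simp only [Matrix.mulVec, dotProduct, Fin.sum_univ_two, Matrix.transpose_apply]
      ring
    have hww : w ⬝ᵥ w = w 0 ^ 2 + w 1 ^ 2 := by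
      simp only [dotProduct, Fin.sum_univ_two]; ring
    rw [htr, hBu, htrB, hMw, hNw, hww, e00, e01, e10, e11]
    rw [hdet2] at hdet ⊢
    rw [hww] at hw2
    field_simp
    ring
  refine ⟨key, ?_⟩
  rw [key, Real.sqrt_div huu_nonneg, Real.sqrt_mul (by positivity), Real.sqrt_sq_eq_abs]
  rw [div_mul_eq_div_div_swap]
  rw [hs]
  generalize Real.sqrt (u ⬝ᵥ u) = a
  generalize Real.sqrt (w ⬝ᵥ w) = b
  ring
end

section
/- Let A: ℝ → Matrix (Fin 2) (Fin 2) ℝ, and let g: ℝ → ℝ² be differentiable at t₀ with g(t₀) ≠ 0 and g'(t₀) = −A(t₀)ᵀ·g(t₀). Then n := g/‖g‖ is differentiable at t₀ and n'(t₀) = −A(t₀)ᵀ·n(t₀) + ((A(t₀)·n(t₀))·n(t₀))·n(t₀). -/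
open Matrix

set_option maxHeartbeats 1000000

/-- Evolution equation for the unit normal `n = g/‖g‖` along a characteristic:
if `g` is differentiable at `t₀` with `g(t₀) ≠ 0` and `g'(t₀) = −A(t₀)ᵀ g(t₀)`,
then `n` is differentiable at `t₀` with
`n'(t₀) = −A(t₀)ᵀ n(t₀) + ((A(t₀) n(t₀))·n(t₀)) n(t₀)`. -/
theorem normal_evolution
    (A : ℝ → Matrix (Fin 2) (Fin 2) ℝ) (g : ℝ → Fin 2 → ℝ) (t₀ : ℝ)
    (hg0 : g t₀ ≠ 0)
    (hg : HasDerivAt g (-((A t₀)ᵀ *ᵥ g t₀)) t₀)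
    (n : ℝ → Fin 2 → ℝ)
    (hn : n = fun t => (Real.sqrt (g t ⬝ᵥ g t))⁻¹ • g t) :
    HasDerivAt n (-((A t₀)ᵀ *ᵥ n t₀) + ((A t₀ *ᵥ n t₀) ⬝ᵥ n t₀) • n t₀) t₀ := by
  subst hn
  have hc : 0 < g t₀ ⬝ᵥ g t₀ := by
    have h1 : g t₀ ⬝ᵥ g t₀ ≠ 0 := fun h => hg0 (dotProduct_self_eq_zero.mp h)
    have h2 : 0 ≤ g t₀ ⬝ᵥ g t₀ := by
      simp only [dotProduct, Fin.sum_univ_two]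
      nlinarith [mul_self_nonneg (g t₀ 0), mul_self_nonneg (g t₀ 1)]
    exact h2.lt_of_ne (Ne.symm h1)
  have hs0 : Real.sqrt (g t₀ ⬝ᵥ g t₀) ≠ 0 := Real.sqrt_ne_zero'.mpr hc
  have hgi := hasDerivAt_pi.mp hg
  have hf : HasDerivAt (fun t => g t ⬝ᵥ g t)
      ((-((A t₀)ᵀ *ᵥ g t₀)) 0 * g t₀ 0 + g t₀ 0 * (-((A t₀)ᵀ *ᵥ g t₀)) 0
        + ((-((A t₀)ᵀ *ᵥ g t₀)) 1 * g t₀ 1 + g t₀ 1 * (-((A t₀)ᵀ *ᵥ g t₀)) 1)) t₀ := by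
    simp only [dotProduct, Fin.sum_univ_two]
    exact (((hgi 0).mul (hgi 0)).add ((hgi 1).mul (hgi 1)))
  have hmain := ((hf.sqrt hc.ne').inv hs0).smul hg
  refine hmain.congr_deriv ?_
  funext i
  fin_cases i <;>
  · simp only [Pi.add_apply, Pi.neg_apply, Pi.smul_apply, Pi.inv_apply, smul_eq_mul,
      Matrix.mulVec, dotProduct, Fin.sum_univ_two, Matrix.transpose_apply]
    field_simp
    ring
end

section
/- Let A: ℝ → Matrix (Fin 2) (Fin 2) ℝ, and let n: ℝ → ℝ² be differentiable at t₀ with n'(t₀) = −A(t₀)ᵀ·n(t₀) + ((A(t₀)·n(t₀))·n(t₀))·n(t₀). Then the matrix-valued map 𝒞(t) = I − n(t)⊗n(t) is differentiable at t₀ and 𝒞'(t₀) = A(t₀)ᵀ·(n(t₀)⊗n(t₀)) + (n(t₀)⊗n(t₀))·A(t₀) − 2·((A(t₀)·n(t₀))·n(t₀))·(n(t₀)⊗n(t₀)). -/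
open Matrix

attribute [local instance] Matrix.normedAddCommGroup Matrix.normedSpace

/-- Evolution equation for the surface projector `𝒞 = I − n⊗n` along a
characteristic: if `n` is differentiable at `t₀` with
`n'(t₀) = −A(t₀)ᵀ n(t₀) + ((A(t₀) n(t₀))·n(t₀)) n(t₀)`, then `𝒞` is
differentiable at `t₀` with
`𝒞'(t₀) = A(t₀)ᵀ (n⊗n) + (n⊗n) A(t₀) − 2((A(t₀)n)·n)(n⊗n)` (at `t₀`). -/
theorem projector_evolution
    (A : ℝ → Matrix (Fin 2) (Fin 2) ℝ) (n : ℝ → Fin 2 → ℝ) (t₀ : ℝ)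
    (hn : HasDerivAt n (-((A t₀)ᵀ *ᵥ n t₀) + ((A t₀ *ᵥ n t₀) ⬝ᵥ n t₀) • n t₀) t₀)
    (C : ℝ → Matrix (Fin 2) (Fin 2) ℝ)
    (hC : C = fun t => 1 - vecMulVec (n t) (n t)) :
    HasDerivAt C
      ((A t₀)ᵀ * vecMulVec (n t₀) (n t₀) + vecMulVec (n t₀) (n t₀) * A t₀
        - (2 * ((A t₀ *ᵥ n t₀) ⬝ᵥ n t₀)) • vecMulVec (n t₀) (n t₀)) t₀ := by
  subst hC
  set d : Fin 2 → ℝ := -((A t₀)ᵀ *ᵥ n t₀) + ((A t₀ *ᵥ n t₀) ⬝ᵥ n t₀) • n t₀ with hd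
  have hni : ∀ i, HasDerivAt (fun t => n t i) (d i) t₀ := hasDerivAt_pi.1 hn
  have key : ∀ i j, HasDerivAt (fun t => (1 : Matrix (Fin 2) (Fin 2) ℝ) i j - n t i * n t j)
      (0 - (d i * n t₀ j + n t₀ i * d j)) t₀ :=
    fun i j => (hasDerivAt_const _ _).sub ((hni i).mul (hni j))
  have h : HasDerivAt (fun t => (1 : Matrix (Fin 2) (Fin 2) ℝ) - vecMulVec (n t) (n t))
      (Matrix.of fun i j => 0 - (d i * n t₀ j + n t₀ i * d j)) t₀ := by
    refine hasDerivAt_pi.2 ?_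
    intro i
    refine hasDerivAt_pi.2 ?_
    intro j
    exact key i j
  convert h using 1
  ext i j
  simp only [hd, Matrix.add_apply, Matrix.sub_apply, Matrix.smul_apply, Matrix.mul_apply,
    Matrix.of_apply, vecMulVec_apply, Matrix.transpose_apply, Matrix.mulVec, dotProduct,
    Fin.sum_univ_two, Pi.add_apply, Pi.neg_apply, Pi.smul_apply, smul_eq_mul]
  ring
end

section
/- Let A: ℝ → Matrix (Fin 2) (Fin 2) ℝ, let n: ℝ → ℝ² be differentiable at t₀ with n'(t₀) = −A(t₀)ᵀ·n(t₀) + ((A(t₀)·n(t₀))·n(t₀))·n(t₀), set 𝒞(t) = I − n(t)⊗n(t), let Z: ℝ → ℝ be differentiable at t₀ with Z'(t₀) = Z(t₀)·Tr(A(t₀)ᵀ·𝒞(t₀)), and let f: ℝ → ℝ be differentiable at Z(t₀). Then the stress tensor σ(t) = f(Z(t))·𝒞(t) is differentiable at t₀ and σ'(t₀) = (f'(Z(t₀))·Z(t₀)·Tr(A(t₀)ᵀ·𝒞(t₀)))·𝒞(t₀) + f(Z(t₀))·( A(t₀)ᵀ·(n(t₀)⊗n(t₀)) + (n(t₀)⊗n(t₀))·A(t₀)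 − 2·((A(t₀)·n(t₀))·n(t₀))·(n(t₀)⊗n(t₀)) ). -/
open Matrix

attribute [local instance] Matrix.normedAddCommGroup Matrix.normedSpace

/-- Evolution equation (Proposition 3.1 / Appendix B) for the membrane stress
tensor `σ = f(Z)·𝒞` with `𝒞 = I − n⊗n`, along a characteristic: if
`n' = −Aᵀn + ((An)·n)n`, `Z' = Z·Tr(Aᵀ𝒞)` and `f` is differentiable at `Z(t₀)`,
then `σ` is differentiable at `t₀` and
`σ' = (f'(Z) Z Tr(Aᵀ𝒞)) 𝒞 + f(Z)(Aᵀ(n⊗n) + (n⊗n)A − 2((An)·n)(n⊗n))`. -/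
theorem stress_tensor_evolution
    (A : ℝ → Matrix (Fin 2) (Fin 2) ℝ) (n : ℝ → Fin 2 → ℝ) (t₀ : ℝ)
    (hn : HasDerivAt n (-((A t₀)ᵀ *ᵥ n t₀) + ((A t₀ *ᵥ n t₀) ⬝ᵥ n t₀) • n t₀) t₀)
    (C : ℝ → Matrix (Fin 2) (Fin 2) ℝ)
    (hC : C = fun t => 1 - vecMulVec (n t) (n t))
    (Z : ℝ → ℝ)
    (hZ : HasDerivAt Z (Z t₀ * ((A t₀)ᵀ * C t₀).trace) t₀)
    (f : ℝ → ℝ) (f' : ℝ) (hf : HasDerivAt f f' (Z t₀)) :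
    HasDerivAt (fun t => f (Z t) • C t)
      ((f' * Z t₀ * ((A t₀)ᵀ * C t₀).trace) • C t₀
        + f (Z t₀) •
          ((A t₀)ᵀ * vecMulVec (n t₀) (n t₀) + vecMulVec (n t₀) (n t₀) * A t₀
            - (2 * ((A t₀ *ᵥ n t₀) ⬝ᵥ n t₀)) • vecMulVec (n t₀) (n t₀))) t₀ := by
  subst hC
  set tr : ℝ := ((A t₀)ᵀ * (1 - vecMulVec (n t₀) (n t₀))).trace with htr
  have hni : ∀ i, HasDerivAt (fun t => n t i)
      ((-((A t₀)ᵀ *ᵥ n t₀) + ((A t₀ *ᵥ n t₀) ⬝ᵥ n t₀) • n t₀) i) t₀ :=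
    fun i => hasDerivAt_pi.mp hn i
  have hfZ : HasDerivAt (fun t => f (Z t)) (f' * (Z t₀ * tr)) t₀ := hf.comp t₀ hZ
  have key : ∀ i j, HasDerivAt
      (fun t => f (Z t) * ((1 : Matrix (Fin 2) (Fin 2) ℝ) i j - n t i * n t j))
      (((f' * Z t₀ * tr) • (1 - vecMulVec (n t₀) (n t₀))
        + f (Z t₀) •
          ((A t₀)ᵀ * vecMulVec (n t₀) (n t₀) + vecMulVec (n t₀) (n t₀) * A t₀
            - (2 * ((A t₀ *ᵥ n t₀) ⬝ᵥ n t₀)) • vecMulVec (n t₀) (n t₀))) i j) t₀ := by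
    intro i j
    have h1 : HasDerivAt (fun t => (1 : Matrix (Fin 2) (Fin 2) ℝ) i j - n t i * n t j)
        (0 - (((-((A t₀)ᵀ *ᵥ n t₀) + ((A t₀ *ᵥ n t₀) ⬝ᵥ n t₀) • n t₀) i) * n t₀ j
          + n t₀ i * ((-((A t₀)ᵀ *ᵥ n t₀) + ((A t₀ *ᵥ n t₀) ⬝ᵥ n t₀) • n t₀) j))) t₀ :=
      (hasDerivAt_const t₀ _).sub ((hni i).mul (hni j))
    have h2 : HasDerivAt
        (fun t => f (Z t) * ((1 : Matrix (Fin 2) (Fin 2) ℝ) i j - n t i * n t j)) _ t₀ :=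
      hfZ.mul h1
    convert h2 using 1
    simp only [Matrix.add_apply, Matrix.smul_apply, Matrix.sub_apply, Matrix.mul_apply,
      Matrix.vecMulVec_apply, Matrix.one_apply, Matrix.transpose_apply, Matrix.mulVec,
      dotProduct, Pi.add_apply, Pi.neg_apply, Pi.smul_apply, Fin.sum_univ_two,
      smul_eq_mul]
    ring
  exact hasDerivAt_pi.mpr fun i => hasDerivAt_pi.mpr fun j => key i j
end
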